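/- Let m ≥ 1 and t ≥ 1 be natural numbers, ε > 0, D ≥ 0, H ≥ 0 reals. Let v : Finset (Fin m) → ℝ with 0 ≤ v(S) ≤ H for all S, and θ : ℕ → Fin m → ℝ with 0 ≤ θ(τ, j) ≤ D for all τ, j. For S : Finset (Fin m) and p : Fin m → ℝ write u(S, p) = v(S) − ∑_{j ∈ S} p(j). Let μ be the product over Fin m of the exponential distribution with rate ε on ℝ (density ε·e^{−εs} on [0,∞)). Let B, B' : (Fin m → ℝ) → Finset (Fin m) be measurable maps (preimages of each finset are measurable) such that for every x : Fin m → ℝ and every S : Finset (Fin m): u(B(x), x) + ∑_{τ=1}^{t} u(B(x), θ(τ)) ≥ u(S, x) + ∑_{τ=1}^{t} u(S, θ(τ)), and u(B'(x), x) + ∑_{τ=1}^{t−1} u(B'(x), θ(τ)) ≥ u(S, x) + ∑_{τ=1}^{t−1} u(S, θ(τ)). Then ∫ (u(B(x), θ(t)) − u(B'(x), θ(t))) dμ(x) ≤ (m·D + H)·(m/t + 3·ε·m·D). -/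

import Mathlib

open MeasureTheory

namespace FTPLAux

open ProbabilityTheory Real Set
open scoped NNReal ENNReal

variable {ε : ℝ}

/-- The real-valued exponential density. -/
noncomputable def psi (ε : ℝ) : ℝ → ℝ := exponentialPDFReal ε

lemma psi_def (ε x : ℝ) : psi ε x = if 0 ≤ x then ε * Real.exp (-(ε * x)) else 0 := by
  simp only [psi, exponentialPDFReal, gammaPDFReal, rpow_one, Real.Gamma_one, div_one,
    sub_self, rpow_zero, mul_one]

lemma psi_nonneg {ε : ℝ} (hε : 0 < ε) (x : ℝ) : 0 ≤ psi ε x := by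
  rw [psi_def]; split_ifs
  · positivity
  · exact le_refl 0

lemma psi_le {ε : ℝ} (hε : 0 < ε) (x : ℝ) : psi ε x ≤ ε := by
  rw [psi_def]; split_ifs with h
  · nlinarith [Real.exp_le_one_iff.mpr (by nlinarith : -(ε*x) ≤ 0), Real.exp_pos (-(ε*x))]
  · exact hε.le

lemma psi_meas (ε : ℝ) : Measurable (psi ε) := measurable_exponentialPDFReal ε

lemma psi_of_neg {ε x : ℝ} (hx : x < 0) : psi ε x = 0 := by
  rw [psi_def, if_neg (not_le.mpr hx)]

lemma psi_anti {ε : ℝ} (hε : 0 < ε) {u v : ℝ} (hu : 0 ≤ u) (huv : u ≤ v) :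
    psi ε v ≤ psi ε u := by
  rw [psi_def, psi_def, if_pos hu, if_pos (hu.trans huv)]
  have := Real.exp_le_exp.mpr (show -(ε*v) ≤ -(ε*u) by nlinarith)
  nlinarith [Real.exp_pos (-(ε*v))]

lemma expMeasure_eq (ε : ℝ) :
    expMeasure ε = volume.withDensity fun x => ENNReal.ofReal (psi ε x) := rfl


lemma psi_integrable (hε : 0 < ε) : Integrable (psi ε) := by
  refine ⟨(psi_meas ε).aestronglyMeasurable, ?_⟩
  rw [hasFiniteIntegral_iff_ofReal (ae_of_all _ (psi_nonneg hε))]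
  have : (fun x => ENNReal.ofReal (psi ε x)) = exponentialPDF ε := rfl
  rw [this, lintegral_exponentialPDF_eq_one hε]
  exact ENNReal.one_lt_top

lemma psi_integral_one (hε : 0 < ε) : ∫ x, psi ε x = 1 := by
  rw [integral_eq_lintegral_of_nonneg_ae (ae_of_all _ (psi_nonneg hε))
    (psi_meas ε).aestronglyMeasurable]
  have : (fun x => ENNReal.ofReal (psi ε x)) = exponentialPDF ε := rfl
  rw [this, lintegral_exponentialPDF_eq_one hε]
  simp

lemma integral_expMeasure (hε : 0 < ε) (φ : ℝ → ℝ) :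
    ∫ s, φ s ∂(expMeasure ε) = ∫ s, psi ε s * φ s := by
  rw [expMeasure_eq]
  have h1 : (volume.withDensity fun x => ENNReal.ofReal (psi ε x))
      = volume.withDensity fun x => ((Real.toNNReal (psi ε x) : ℝ≥0) : ℝ≥0∞) := rfl
  rw [h1, integral_withDensity_eq_integral_smul ((psi_meas ε).real_toNNReal) φ]
  congr 1; funext x
  simp [NNReal.smul_def, Real.coe_toNNReal _ (psi_nonneg hε x)]

lemma subst_affine {a : ℝ} (ha : 0 < a) (b : ℝ) (G : ℝ → ℝ) :
    ∫ x, G (a * x + b) = a⁻¹ * ∫ y, G y := by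
  have h1 : (fun x : ℝ => G (a * x + b)) = fun x : ℝ => (fun u => G (u + b)) (a * x) := rfl
  rw [h1, MeasureTheory.Measure.integral_comp_mul_left (fun u => G (u + b)) a,
    integral_add_right_eq_self (fun u : ℝ => G u) b, abs_of_pos (inv_pos.mpr ha), smul_eq_mul]

lemma integral_psi_comp (hε : 0 < ε) {a : ℝ} (ha : 0 < a) (b : ℝ) (φ : ℝ → ℝ) :
    ∫ x, psi ε x * φ (a * x + b) = ∫ y, a⁻¹ * psi ε ((y - b) / a) * φ y := by
  have h := subst_affine ha b (fun y => a⁻¹ * psi ε ((y - b) / a) * φ y)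
  have h2 : (fun x : ℝ => a⁻¹ * psi ε ((a * x + b - b) / a) * φ (a * x + b))
      = fun x : ℝ => a⁻¹ * (psi ε x * φ (a * x + b)) := by
    funext x
    rw [add_sub_cancel_right, mul_div_cancel_left₀ _ ha.ne', mul_assoc]
  rw [h2, integral_const_mul] at h
  have := mul_left_cancel₀ (inv_ne_zero ha.ne') h
  linarith [this]

lemma shifted_density_integrable (hε : 0 < ε) {a : ℝ} (ha : 0 < a) (b : ℝ) :
    Integrable (fun y => a⁻¹ * psi ε ((y - b) / a)) := by
  have h1 : Integrable (fun x : ℝ => psi ε (a⁻¹ * x)) :=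
    (psi_integrable hε).comp_mul_left' (inv_ne_zero ha.ne')
  have h2 : Integrable (fun y : ℝ => psi ε (a⁻¹ * (y + -b))) := by
    have mp := measurePreserving_add_right (volume : Measure ℝ) (-b)
    exact (mp.integrable_comp h1.aestronglyMeasurable).mpr h1
  refine (h2.const_mul a⁻¹).congr (ae_of_all _ fun y => ?_)
  congr 2
  field_simp
  ring


/-- The key one-dimensional estimate. -/
lemma oneDim (hε : 0 < ε) {a b D C : ℝ} (ha0 : 0 < a) (ha1 : a ≤ 1) (hD : 0 ≤ D)
    (hb : |b| ≤ a * D) (hC : 0 ≤ C) {φ : ℝ → ℝ} (hφm : Measurable φ)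
    (hφ0 : ∀ s, 0 ≤ φ s) (hφC : ∀ s, φ s ≤ C) :
    ∫ s, φ (a * s + b) ∂(expMeasure ε)
      ≤ (∫ s, φ s ∂(expMeasure ε)) + C * ((a⁻¹ - 1) + ε * D) := by
  set f : ℝ → ℝ := fun y => a⁻¹ * psi ε ((y - b) / a) with hf_def
  set k : ℝ → ℝ := fun y => a⁻¹ * psi ε (y / a) with hk_def
  have ha0' : (0:ℝ) < a⁻¹ := inv_pos.mpr ha0
  have hf_meas : Measurable f :=
    ((psi_meas ε).comp ((measurable_id.sub_const b).div_const a)).const_mul a⁻¹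
  have hk_meas : Measurable k :=
    ((psi_meas ε).comp (measurable_id.div_const a)).const_mul a⁻¹
  have hf_int : Integrable f := shifted_density_integrable hε ha0 b
  have hk_int : Integrable k := by
    have := shifted_density_integrable hε ha0 0
    simpa using this
  have hf_nonneg : ∀ y, 0 ≤ f y := fun y => mul_nonneg ha0'.le (psi_nonneg hε _)
  have hk_nonneg : ∀ y, 0 ≤ k y := fun y => mul_nonneg ha0'.le (psi_nonneg hε _)
  have hf_one : ∫ y, f y = 1 := by
    have := integral_psi_comp hε ha0 b (fun _ => 1)
    simpa [psi_integral_one hε] using this.symm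
  have hk_one : ∫ y, k y = 1 := by
    have := integral_psi_comp hε ha0 0 (fun _ => 1)
    simpa [psi_integral_one hε] using this.symm
  -- integrability of products with φ
  have hprod : ∀ g : ℝ → ℝ, Integrable g → Measurable g → (∀ y, 0 ≤ g y) →
      Integrable (fun y => g y * φ y) := by
    intro g hg hgm hg0
    refine Integrable.mono' (hg.mul_const C) (hgm.mul hφm).aestronglyMeasurable
      (ae_of_all _ fun y => ?_)
    rw [Real.norm_eq_abs, abs_mul, abs_of_nonneg (hg0 y), abs_of_nonneg (hφ0 y)]
    exact mul_le_mul_of_nonneg_left (hφC y) (hg0 y)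
  have hfφ := hprod f hf_int hf_meas hf_nonneg
  have hainv : (1:ℝ) ≤ a⁻¹ := by nlinarith [mul_inv_cancel₀ ha0.ne']
  have hkφ := hprod k hk_int hk_meas hk_nonneg
  have hψφ := hprod (psi ε) (psi_integrable hε) (psi_meas ε) (psi_nonneg hε)
  have hsubkψ : Integrable (fun y => (k y - psi ε y) * φ y) := by
    refine (hkφ.sub hψφ).congr (ae_of_all _ fun y => ?_)
    simp only [Pi.sub_apply]; ring
  have hsubfk : Integrable (fun y => (f y - k y) * φ y) := by
    refine (hfφ.sub hkφ).congr (ae_of_all _ fun y => ?_)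
    simp only [Pi.sub_apply]; ring
  -- rewrite both sides as volume integrals
  rw [integral_expMeasure hε, integral_expMeasure hε, integral_psi_comp hε ha0 b φ]
  have hid : (fun y => a⁻¹ * psi ε ((y - b) / a) * φ y)
      = fun y => psi ε y * φ y + ((k y - psi ε y) * φ y + (f y - k y) * φ y) := by
    funext y; simp only [hf_def, hk_def]; ring
  have hsplit : ∫ y, a⁻¹ * psi ε ((y - b) / a) * φ y
      = (∫ y, psi ε y * φ y) + ((∫ y, (k y - psi ε y) * φ y) + ∫ y, (f y - k y) * φ y) := by
    have hsum2 : Integrable (fun y => (k y - psi ε y) * φ y + (f y - k y) * φ y) := by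
      refine (hsubkψ.add hsubfk).congr (ae_of_all _ fun y => ?_)
      simp [Pi.add_apply]
    rw [hid, integral_add hψφ hsum2, integral_add hsubkψ hsubfk]
  rw [hsplit]
  -- term A : scale part
  have hA : (∫ y, (k y - psi ε y) * φ y) ≤ (a⁻¹ - 1) * C := by
    have pw : ∀ y, (k y - psi ε y) * φ y ≤ ((a⁻¹ - 1) * C) * psi ε y := by
      intro y
      have hkψ : k y ≤ a⁻¹ * psi ε y := by
        rcases le_or_gt 0 y with hy | hy
        · refine mul_le_mul_of_nonneg_left ?_ ha0'.le
          exact psi_anti hε hy (by rw [le_div_iff₀ ha0]; nlinarith)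
        · have h1 : y / a < 0 := div_neg_of_neg_of_pos hy ha0
          simp only [hk_def, psi_of_neg h1, psi_of_neg hy, mul_zero]
          exact le_refl 0
      rcases le_or_gt (k y - psi ε y) 0 with hneg | hpos
      · have : (k y - psi ε y) * φ y ≤ 0 := mul_nonpos_of_nonpos_of_nonneg hneg (hφ0 y)
        have h2 : 0 ≤ ((a⁻¹ - 1) * C) * psi ε y := by
          apply mul_nonneg (mul_nonneg (by linarith) hC) (psi_nonneg hε y)
        linarith
      · calc (k y - psi ε y) * φ y ≤ (k y - psi ε y) * C :=
              mul_le_mul_of_nonneg_left (hφC y) hpos.le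
          _ ≤ ((a⁻¹ - 1) * psi ε y) * C := by
              have : k y - psi ε y ≤ (a⁻¹ - 1) * psi ε y := by nlinarith [psi_nonneg hε y]
              exact mul_le_mul_of_nonneg_right this hC
          _ = ((a⁻¹ - 1) * C) * psi ε y := by ring
    calc (∫ y, (k y - psi ε y) * φ y) ≤ ∫ y, ((a⁻¹ - 1) * C) * psi ε y :=
          integral_mono hsubkψ ((psi_integrable hε).const_mul _) pw
      _ = (a⁻¹ - 1) * C := by rw [integral_const_mul, psi_integral_one hε, mul_one]
  have hB : (∫ y, (f y - k y) * φ y) ≤ C * (ε * D) := by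
    rcases le_or_gt 0 b with hbpos | hbneg
    · -- shift to the right
      set E := Real.exp (-(ε * (b / a))) with hE
      have hE1 : E ≤ 1 := Real.exp_le_one_iff.mpr
        (by nlinarith [div_nonneg hbpos ha0.le])
      have hE0 : (0:ℝ) < E := Real.exp_pos _
      have pw : ∀ y, (f y - k y) * φ y ≤ ((1 - E) * C) * f y := by
        intro y
        have key : E * f y ≤ k y := by
          rcases lt_or_ge y b with hyb | hyb
          · have h1 : (y - b) / a < 0 := div_neg_of_neg_of_pos (by linarith) ha0
            have hf0 : f y = 0 := by simp [hf_def, psi_of_neg h1]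
            rw [hf0, mul_zero]; exact hk_nonneg y
          · have hy0 : (0:ℝ) ≤ y := le_trans hbpos hyb
            have h1 : 0 ≤ (y - b) / a := div_nonneg (by linarith) ha0.le
            have h2 : 0 ≤ y / a := div_nonneg hy0 ha0.le
            have hkey : E * psi ε ((y - b) / a) = psi ε (y / a) := by
              calc E * psi ε ((y - b) / a)
                  = ε * Real.exp (-(ε * (b / a)) + -(ε * ((y - b) / a))) := by
                    rw [psi_def ε ((y - b) / a), if_pos h1, Real.exp_add, hE]; ring
                _ = psi ε (y / a) := by
                    rw [psi_def ε (y / a), if_pos h2]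
                    congr 1
                    field_simp
                    ring
            have : E * f y = k y := by
              simp only [hf_def, hk_def]
              rw [← hkey]; ring
            exact this.le
        have h3 : f y - k y ≤ (1 - E) * f y := by nlinarith [hf_nonneg y]
        calc (f y - k y) * φ y ≤ ((1 - E) * f y) * φ y :=
              mul_le_mul_of_nonneg_right h3 (hφ0 y)
          _ ≤ ((1 - E) * f y) * C := by
              refine mul_le_mul_of_nonneg_left (hφC y) ?_
              nlinarith [hf_nonneg y]
          _ = ((1 - E) * C) * f y := by ring
      have hint : (∫ y, (f y - k y) * φ y) ≤ ((1 - E) * C) * 1 := by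
        calc (∫ y, (f y - k y) * φ y) ≤ ∫ y, ((1 - E) * C) * f y :=
              integral_mono hsubfk (hf_int.const_mul _) pw
          _ = ((1 - E) * C) * 1 := by rw [integral_const_mul, hf_one]
      have h5 : b / a ≤ D := (div_le_iff₀ ha0).mpr (by nlinarith [le_abs_self b])
      have h4 : 1 - E ≤ ε * D := by
        have := Real.add_one_le_exp (-(ε * (b / a)))
        have h6 : ε * (b / a) ≤ ε * D := mul_le_mul_of_nonneg_left h5 hε.le
        simp only [← hE] at this
        linarith
      nlinarith
    · -- shift to the left
      set c : ℝ := C * (ε * a⁻¹) with hc_def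
      have hc0 : 0 ≤ c := by positivity
      have pw : ∀ y, (f y - k y) * φ y ≤ Set.indicator (Set.Ico b 0) (fun _ => c) y := by
        intro y
        rcases le_or_gt 0 y with hy0 | hy0
        · have hdiv : y / a ≤ (y - b) / a := by gcongr <;> linarith
          have hfk : f y ≤ k y := by
            refine mul_le_mul_of_nonneg_left ?_ ha0'.le
            exact psi_anti hε (div_nonneg hy0 ha0.le) hdiv
          have h1 : (f y - k y) * φ y ≤ 0 :=
            mul_nonpos_of_nonpos_of_nonneg (by linarith) (hφ0 y)
          have hind : Set.indicator (Set.Ico b 0) (fun _ => c) y = 0 :=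
            Set.indicator_of_notMem (by simp [Set.mem_Ico]; intro _; linarith) _
          linarith
        · rcases lt_or_ge y b with hyb | hyb
          · have h1 : (y - b) / a < 0 := div_neg_of_neg_of_pos (by linarith) ha0
            have hf0 : f y = 0 := by simp [hf_def, psi_of_neg h1]
            have h2 : (f y - k y) * φ y ≤ 0 :=
              mul_nonpos_of_nonpos_of_nonneg (by rw [hf0]; linarith [hk_nonneg y]) (hφ0 y)
            have hind : Set.indicator (Set.Ico b 0) (fun _ => c) y = 0 :=
              Set.indicator_of_notMem (by simp [Set.mem_Ico]; intro h; linarith) _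
            linarith
          · have hind : Set.indicator (Set.Ico b 0) (fun _ => c) y = c :=
              Set.indicator_of_mem (Set.mem_Ico.mpr ⟨hyb, hy0⟩) _
            have hfy : f y ≤ a⁻¹ * ε :=
              mul_le_mul_of_nonneg_left (psi_le hε _) ha0'.le
            calc (f y - k y) * φ y ≤ f y * φ y :=
                  mul_le_mul_of_nonneg_right (by linarith [hk_nonneg y]) (hφ0 y)
              _ ≤ f y * C := mul_le_mul_of_nonneg_left (hφC y) (hf_nonneg y)
              _ ≤ (a⁻¹ * ε) * C := mul_le_mul_of_nonneg_right hfy hC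
              _ = c := by rw [hc_def]; ring
              _ = Set.indicator (Set.Ico b 0) (fun _ => c) y := hind.symm
      have hmeasIco : MeasurableSet (Set.Ico b (0:ℝ)) := measurableSet_Ico
      have hind_int : Integrable (Set.indicator (Set.Ico b 0) fun _ => c) := by
        rw [integrable_indicator_iff hmeasIco]
        refine (integrableOn_const_iff (C := c)).mpr (Or.inr ?_)
        rw [Real.volume_Ico]
        exact ENNReal.ofReal_lt_top
      have hint : (∫ y, (f y - k y) * φ y)
          ≤ ∫ y, Set.indicator (Set.Ico b 0) (fun _ => c) y :=
        integral_mono hsubfk hind_int pw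
      have heval : (∫ y, Set.indicator (Set.Ico b 0) (fun _ => c) y) = (0 - b) * c := by
        rw [integral_indicator_const _ hmeasIco, measureReal_def, Real.volume_Ico,
          ENNReal.toReal_ofReal (by linarith), smul_eq_mul]
      have h6 : (-b) * a⁻¹ ≤ D := by
        rw [← div_eq_mul_inv]
        exact (div_le_iff₀ ha0).mpr (by nlinarith [neg_le_abs b])
      have h7 : (0 - b) * c ≤ C * (ε * D) := by
        calc (0 - b) * c = (C * ε) * ((-b) * a⁻¹) := by rw [hc_def]; ring
          _ ≤ (C * ε) * D := mul_le_mul_of_nonneg_left h6 (by positivity)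
          _ = C * (ε * D) := by ring
      linarith
  have hfinal : (a⁻¹ - 1) * C + C * (ε * D) ≤ C * ((a⁻¹ - 1) + ε * D) := by ring_nf; exact le_refl _
  linarith

lemma bounded_integrable {δ : Type*} [MeasurableSpace δ] (ρ : Measure δ)
    [IsProbabilityMeasure ρ] {C : ℝ} {F : δ → ℝ} (hF : Measurable F)
    (h0 : ∀ x, 0 ≤ F x) (hC : ∀ x, F x ≤ C) : Integrable F ρ := by
  refine Integrable.mono' (integrable_const C) hF.aestronglyMeasurable
    (ae_of_all _ fun x => ?_)
  rw [Real.norm_eq_abs, abs_of_nonneg (h0 x)]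
  exact hC x

/-- Inserting a real coordinate at position `j`. -/
def ins {n : ℕ} (j : Fin (n + 1)) (s : ℝ) (y : Fin n → ℝ) : Fin (n + 1) → ℝ :=
  Fin.insertNth j s y

lemma ins_same {n : ℕ} (j : Fin (n + 1)) (s : ℝ) (y : Fin n → ℝ) : ins j s y j = s := by
  simp [ins]

lemma ins_succAbove {n : ℕ} (j : Fin (n + 1)) (s : ℝ) (y : Fin n → ℝ) (i : Fin n) :
    ins j s y (j.succAbove i) = y i := by
  simp [ins]

lemma insertNth_update {n : ℕ} (j : Fin (n + 1)) (s c : ℝ) (y : Fin n → ℝ) :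
    Function.update (ins j s y) j c = ins j c y := by
  funext i
  rcases eq_or_ne i j with rfl | hij
  · rw [Function.update_self, ins_same]
  · obtain ⟨i', rfl⟩ := Fin.exists_succAbove_eq hij
    rw [Function.update_of_ne hij, ins_succAbove, ins_succAbove]

lemma update_bound (n : ℕ) {ε a D C : ℝ} (hε : 0 < ε) (ha0 : 0 < a) (ha1 : a ≤ 1)
    (hD : 0 ≤ D) (hC : 0 ≤ C) (j : Fin (n + 1)) {β : ℝ} (hβ : |β| ≤ a * D)
    {h : (Fin (n + 1) → ℝ) → ℝ} (hm : Measurable h) (h0 : ∀ x, 0 ≤ h x)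
    (hCb : ∀ x, h x ≤ C) :
    ∫ x, h (Function.update x j (a * x j + β)) ∂(Measure.pi fun _ => expMeasure ε)
      ≤ (∫ x, h x ∂(Measure.pi fun _ => expMeasure ε)) + C * ((a⁻¹ - 1) + ε * D) := by
  haveI : IsProbabilityMeasure (expMeasure ε) := isProbabilityMeasure_expMeasure hε
  set μ1 : Measure ℝ := expMeasure ε with hμ1
  set μ' : Measure (Fin n → ℝ) := Measure.pi fun _ => expMeasure ε with hμ'
  set pim : Measure (Fin (n + 1) → ℝ) := Measure.pi fun _ => expMeasure ε with hpim
  let e := MeasurableEquiv.piFinSuccAbove (fun _ : Fin (n + 1) => ℝ) j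
  have MP : MeasurePreserving e pim (μ1.prod μ') :=
    measurePreserving_piFinSuccAbove (fun _ => expMeasure ε) j
  have hsymm : ∀ (s : ℝ) (y : Fin n → ℝ), e.symm (s, y) = ins j s y := by
    intro s y
    simp [e, ins, MeasurableEquiv.piFinSuccAbove, Fin.insertNthEquiv]
  have hupdate : Measurable fun x : Fin (n + 1) → ℝ =>
      Function.update x j (a * x j + β) := by
    refine measurable_pi_iff.mpr fun i => ?_
    rcases eq_or_ne i j with rfl | hij
    · have hg : Measurable fun x : Fin (n + 1) → ℝ => a * x i + β :=
        by fun_prop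
      simpa [Function.update_self] using hg
    · have hg : Measurable fun x : Fin (n + 1) → ℝ => x i := measurable_pi_apply i
      simpa [Function.update_of_ne hij] using hg
  have hF1m : Measurable fun x : Fin (n + 1) → ℝ =>
      h (Function.update x j (a * x j + β)) := hm.comp hupdate
  -- transfer to the product measure
  have key : ∀ F : (Fin (n + 1) → ℝ) → ℝ, Measurable F →
      ∫ x, F x ∂pim = ∫ z, F (e.symm z) ∂(μ1.prod μ') := by
    intro F hF
    rw [← MP.integral_comp e.measurableEmbedding (fun z => F (e.symm z))]
    simp
  have hG1m : Measurable fun z : ℝ × (Fin n → ℝ) => h (ins j (a * z.1 + β) z.2) := by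
    refine hm.comp ?_
    have : Measurable fun z : ℝ × (Fin n → ℝ) => ins j (z.1 : ℝ) z.2 := by
      refine measurable_pi_iff.mpr fun i => ?_
      rcases eq_or_ne i j with rfl | hij
      · simpa [ins_same] using measurable_fst
      · obtain ⟨i', rfl⟩ := Fin.exists_succAbove_eq hij
        simp only [ins_succAbove]
        exact (measurable_pi_apply i').comp measurable_snd
    exact this.comp ((measurable_fst.const_mul a).add_const β |>.prodMk measurable_snd)
  have hG2m : Measurable fun z : ℝ × (Fin n → ℝ) => h (ins j z.1 z.2) := by
    refine hm.comp (measurable_pi_iff.mpr fun i => ?_)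
    rcases eq_or_ne i j with rfl | hij
    · simpa [ins_same] using measurable_fst
    · obtain ⟨i', rfl⟩ := Fin.exists_succAbove_eq hij
      simp only [ins_succAbove]
      exact (measurable_pi_apply i').comp measurable_snd
  have hG1i : Integrable (fun z : ℝ × (Fin n → ℝ) => h (ins j (a * z.1 + β) z.2))
      (μ1.prod μ') := bounded_integrable _ hG1m (fun z => h0 _) (fun z => hCb _)
  have hG2i : Integrable (fun z : ℝ × (Fin n → ℝ) => h (ins j z.1 z.2))
      (μ1.prod μ') := bounded_integrable _ hG2m (fun z => h0 _) (fun z => hCb _)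
  have e1 : ∫ x, h (Function.update x j (a * x j + β)) ∂pim
      = ∫ y, (∫ s, h (ins j (a * s + β) y) ∂μ1) ∂μ' := by
    rw [key _ hF1m]
    have : (fun z : ℝ × (Fin n → ℝ) => h (Function.update (e.symm z) j (a * (e.symm z) j + β)))
        = fun z : ℝ × (Fin n → ℝ) => h (ins j (a * z.1 + β) z.2) := by
      funext z
      rw [hsymm z.1 z.2, ins_same, insertNth_update]
    rw [show (∫ z, h (Function.update (e.symm z) j (a * (e.symm z) j + β)) ∂(μ1.prod μ'))
        = ∫ z, h (ins j (a * z.1 + β) z.2) ∂(μ1.prod μ') from by rw [this]]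
    exact integral_prod_symm _ hG1i
  have e2 : ∫ x, h x ∂pim = ∫ y, (∫ s, h (ins j s y) ∂μ1) ∂μ' := by
    rw [key _ hm]
    have : (fun z : ℝ × (Fin n → ℝ) => h (e.symm z))
        = fun z : ℝ × (Fin n → ℝ) => h (ins j z.1 z.2) := by
      funext z; rw [hsymm z.1 z.2]
    rw [this]
    exact integral_prod_symm _ hG2i
  rw [e1, e2]
  have houter1 : Integrable (fun y => ∫ s, h (ins j (a * s + β) y) ∂μ1) μ' :=
    hG1i.integral_prod_right
  have houter2 : Integrable (fun y => ∫ s, h (ins j s y) ∂μ1) μ' :=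
    hG2i.integral_prod_right
  have hpt : ∀ y, (∫ s, h (ins j (a * s + β) y) ∂μ1)
      ≤ (∫ s, h (ins j s y) ∂μ1) + C * ((a⁻¹ - 1) + ε * D) := by
    intro y
    have hφm : Measurable fun s => h (ins j s y) := by
      refine hm.comp (measurable_pi_iff.mpr fun i => ?_)
      rcases eq_or_ne i j with rfl | hij
      · simp only [ins_same]; exact measurable_id
      · obtain ⟨i', rfl⟩ := Fin.exists_succAbove_eq hij
        simp only [ins_succAbove]
        exact measurable_const
    exact oneDim hε ha0 ha1 hD hβ hC hφm (fun s => h0 _) (fun s => hCb _)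
  calc (∫ y, (∫ s, h (ins j (a * s + β) y) ∂μ1) ∂μ')
      ≤ ∫ y, ((∫ s, h (ins j s y) ∂μ1) + C * ((a⁻¹ - 1) + ε * D)) ∂μ' :=
        integral_mono houter1 (houter2.add (integrable_const _)) hpt
    _ = (∫ y, (∫ s, h (ins j s y) ∂μ1) ∂μ') + C * ((a⁻¹ - 1) + ε * D) := by
        rw [integral_add houter2 (integrable_const _), integral_const, probReal_univ,
          one_smul]


lemma piFinSuccAbove_symm_eq {n : ℕ} (j : Fin (n + 1)) (s : ℝ) (y : Fin n → ℝ) :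
    (MeasurableEquiv.piFinSuccAbove (fun _ : Fin (n + 1) => ℝ) j).symm (s, y)
      = ins j s y := by
  simp [MeasurableEquiv.piFinSuccAbove, Fin.insertNthEquiv, ins]

lemma pi_shift_bound (n : ℕ) {ε a D C : ℝ} (hε : 0 < ε) (ha0 : 0 < a) (ha1 : a ≤ 1)
    (hD : 0 ≤ D) (hC : 0 ≤ C) (b : Fin (n + 1) → ℝ) (hb : ∀ j, |b j| ≤ a * D)
    {h : (Fin (n + 1) → ℝ) → ℝ} (hm : Measurable h) (h0 : ∀ x, 0 ≤ h x)
    (hCb : ∀ x, h x ≤ C) :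
    ∫ x, h (fun j => a * x j + b j) ∂(Measure.pi fun _ => expMeasure ε)
      ≤ (∫ x, h x ∂(Measure.pi fun _ => expMeasure ε))
        + C * (n + 1 : ℝ) * ((a⁻¹ - 1) + ε * D) := by
  set pim : Measure (Fin (n + 1) → ℝ) := Measure.pi fun _ => expMeasure ε with hpim
  have claim : ∀ A : Finset (Fin (n + 1)),
      ∫ x, h (fun j => if j ∈ A then a * x j + b j else x j) ∂pim
        ≤ (∫ x, h x ∂pim) + C * (A.card : ℝ) * ((a⁻¹ - 1) + ε * D) := by
    intro A
    induction A using Finset.induction_on with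
    | empty => simp
    | insert _ _ hj =>
      rename_i j A ih
      have hAmod : Measurable fun x : Fin (n + 1) → ℝ =>
          (fun i => if i ∈ A then a * x i + b i else x i) := by
        refine measurable_pi_lambda _ fun i => ?_
        by_cases hi : i ∈ A
        · simp only [if_pos hi]
          have hg : Measurable fun x : Fin (n + 1) → ℝ => a * x i + b i :=
            by fun_prop
          exact hg
        · simp only [if_neg hi]
          have hg : Measurable fun x : Fin (n + 1) → ℝ => x i := measurable_pi_apply i
          exact hg
      set h' : (Fin (n + 1) → ℝ) → ℝ :=
        fun z => h (fun i => if i ∈ A then a * z i + b i else z i) with hh'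
      have hh'm : Measurable h' := hm.comp hAmod
      have heq : (fun x : Fin (n + 1) → ℝ =>
            h (fun i => if i ∈ insert j A then a * x i + b i else x i))
          = fun x => h' (Function.update x j (a * x j + b j)) := by
        funext x
        simp only [hh']
        congr 1
        funext i
        rcases eq_or_ne i j with rfl | hij
        · rw [if_pos (Finset.mem_insert_self i A), if_neg hj, Function.update_self]
        · rw [Function.update_of_ne hij]
          by_cases hi : i ∈ A
          · rw [if_pos hi, if_pos (Finset.mem_insert_of_mem hi)]
          · rw [if_neg hi, if_neg (by simp [Finset.mem_insert, hij, hi])]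
      rw [heq]
      have step := update_bound n hε ha0 ha1 hD hC j (hb j) hh'm
        (fun x => h0 _) (fun x => hCb _)
      have hcard : ((insert j A).card : ℝ) = (A.card : ℝ) + 1 := by
        rw [Finset.card_insert_of_notMem hj]; push_cast; ring
      calc ∫ x, h' (Function.update x j (a * x j + b j)) ∂pim
          ≤ (∫ x, h' x ∂pim) + C * ((a⁻¹ - 1) + ε * D) := step
        _ ≤ ((∫ x, h x ∂pim) + C * (A.card : ℝ) * ((a⁻¹ - 1) + ε * D))
              + C * ((a⁻¹ - 1) + ε * D) := by
            have := ih
            simp only [hh']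
            linarith
        _ = (∫ x, h x ∂pim) + C * ((insert j A).card : ℝ) * ((a⁻¹ - 1) + ε * D) := by
            rw [hcard]; ring
  have huniv := claim Finset.univ
  simp only [Finset.mem_univ, if_true, Finset.card_univ, Fintype.card_fin] at huniv
  calc ∫ x, h (fun j => a * x j + b j) ∂pim
      ≤ (∫ x, h x ∂pim) + C * ((n + 1 : ℕ) : ℝ) * ((a⁻¹ - 1) + ε * D) := huniv
    _ = (∫ x, h x ∂pim) + C * (n + 1 : ℝ) * ((a⁻¹ - 1) + ε * D) := by push_cast; ring

lemma pi_null (n : ℕ) {ε : ℝ} (hε : 0 < ε) (σ : Fin (n + 1) → ℝ) (j0 : Fin (n + 1))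
    (hσ : σ j0 ≠ 0) (c : ℝ) :
    (Measure.pi fun _ : Fin (n + 1) => expMeasure ε) {x | ∑ j, σ j * x j = c} = 0 := by
  haveI : IsProbabilityMeasure (expMeasure ε) := isProbabilityMeasure_expMeasure hε
  set μ1 : Measure ℝ := expMeasure ε with hμ1
  set μ' : Measure (Fin n → ℝ) := Measure.pi fun _ => expMeasure ε with hμ'
  set pim : Measure (Fin (n + 1) → ℝ) := Measure.pi fun _ => expMeasure ε with hpim
  set E : Set (Fin (n + 1) → ℝ) := {x | ∑ j, σ j * x j = c} with hE
  have hsum_meas : Measurable fun x : Fin (n + 1) → ℝ => ∑ j, σ j * x j := by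
    fun_prop
  have hEm : MeasurableSet E := hsum_meas (measurableSet_singleton c)
  let e := MeasurableEquiv.piFinSuccAbove (fun _ : Fin (n + 1) => ℝ) j0
  have MP : MeasurePreserving e pim (μ1.prod μ') :=
    measurePreserving_piFinSuccAbove (fun _ => expMeasure ε) j0
  have hE' : MeasurableSet (e.symm ⁻¹' E) := e.symm.measurable hEm
  have hpi : pim E = (μ1.prod μ') (e.symm ⁻¹' E) := by
    rw [← MP.map_eq, Measure.map_apply e.measurable hE']
    congr 1
    ext x
    simp
  have hsingle : ∀ r : ℝ, μ1 {r} = 0 := by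
    intro r
    rw [hμ1, expMeasure_eq]
    exact (withDensity_absolutelyContinuous _ _) (Real.volume_singleton)
  have hslice : ∀ y : Fin n → ℝ, μ1 ((fun s => (s, y)) ⁻¹' (e.symm ⁻¹' E)) = 0 := by
    intro y
    set K : ℝ := ∑ i, σ (j0.succAbove i) * y i with hK
    have hsymm : ∀ (s : ℝ) (y' : Fin n → ℝ), e.symm (s, y') = ins j0 s y' :=
      piFinSuccAbove_symm_eq j0
    refine measure_mono_null (fun s hs => ?_) (hsingle ((c - K) / σ j0))
    simp only [mem_preimage, hE, mem_setOf_eq, hsymm] at hs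
    rw [Fin.sum_univ_succAbove (fun j => σ j * ins j0 s y j) j0] at hs
    simp only [ins_same] at hs
    have hK2 : ∑ i, σ (j0.succAbove i) * ins j0 s y (j0.succAbove i) = K := by
      rw [hK]
      refine Finset.sum_congr rfl fun i _ => ?_
      rw [ins_succAbove]
    rw [hK2] at hs
    have : s = (c - K) / σ j0 := by
      rw [eq_div_iff hσ]; linarith [hs]
    simpa [mem_singleton_iff] using this
  have hprod : (μ1.prod μ') (e.symm ⁻¹' E) = 0 := by
    rw [Measure.prod_apply_symm hE']
    simp only [hslice]
    simp
  rw [hpi, hprod]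


lemma selector_measurable {m : ℕ} (B : (Fin m → ℝ) → Finset (Fin m))
    (hB : ∀ S, MeasurableSet (B ⁻¹' {S})) (g : Finset (Fin m) → ℝ) :
    Measurable fun x => g (B x) := by
  have hrep : (fun x => g (B x))
      = fun x => ∑ S : Finset (Fin m), (B ⁻¹' {S}).indicator (fun _ => g S) x := by
    funext x
    rw [Finset.sum_eq_single (B x)]
    · simp [Set.indicator_of_mem, Set.mem_preimage]
    · intro S _ hS
      exact Set.indicator_of_notMem
        (by simp only [Set.mem_preimage, Set.mem_singleton_iff]; exact fun h => hS h.symm) _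
    · intro habs; exact absurd (Finset.mem_univ _) habs
  rw [hrep]
  exact Finset.measurable_sum _ fun S _ => measurable_const.indicator (hB S)


end FTPLAux

/-- The buyer's utility from purchasing the bundle `S` at prices `p`. -/
noncomputable def buyerUtil (m : ℕ) (v : Finset (Fin m) → ℝ) (S : Finset (Fin m))
    (p : Fin m → ℝ) : ℝ :=
  v S - ∑ j ∈ S, p j

/-- The product over `Fin m` of exponential distributions with rate `ε`. -/
noncomputable def expPerturbation (m : ℕ) (ε : ℝ) : Measure (Fin m → ℝ) :=
  Measure.pi (fun _ : Fin m => ProbabilityTheory.expMeasure ε)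

theorem exponential_perturbation_stability (m t : ℕ) (hm : 1 ≤ m) (ht : 1 ≤ t)
    (ε D H : ℝ) (hε : 0 < ε) (hD : 0 ≤ D) (hH : 0 ≤ H)
    (v : Finset (Fin m) → ℝ) (hv : ∀ S, 0 ≤ v S ∧ v S ≤ H)
    (θ : ℕ → Fin m → ℝ) (hθ : ∀ τ j, 0 ≤ θ τ j ∧ θ τ j ≤ D)
    (B B' : (Fin m → ℝ) → Finset (Fin m))
    (hBmeas : ∀ S : Finset (Fin m), MeasurableSet (B ⁻¹' {S}))
    (hB'meas : ∀ S : Finset (Fin m), MeasurableSet (B' ⁻¹' {S}))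
    (hB : ∀ (x : Fin m → ℝ) (S : Finset (Fin m)),
      buyerUtil m v (B x) x + ∑ τ ∈ Finset.Icc 1 t, buyerUtil m v (B x) (θ τ) ≥
        buyerUtil m v S x + ∑ τ ∈ Finset.Icc 1 t, buyerUtil m v S (θ τ))
    (hB' : ∀ (x : Fin m → ℝ) (S : Finset (Fin m)),
      buyerUtil m v (B' x) x + ∑ τ ∈ Finset.Icc 1 (t - 1), buyerUtil m v (B' x) (θ τ) ≥
        buyerUtil m v S x + ∑ τ ∈ Finset.Icc 1 (t - 1), buyerUtil m v S (θ τ)) :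
    ∫ x, (buyerUtil m v (B x) (θ t) - buyerUtil m v (B' x) (θ t)) ∂(expPerturbation m ε)
      ≤ (m * D + H) * (m / t + 3 * ε * m * D) := by
  classical
  obtain ⟨n, rfl⟩ : ∃ n, m = n + 1 := ⟨m - 1, (Nat.succ_pred_eq_of_pos hm).symm⟩
  haveI : IsProbabilityMeasure (ProbabilityTheory.expMeasure ε) :=
    ProbabilityTheory.isProbabilityMeasure_expMeasure hε
  set μ : Measure (Fin (n + 1) → ℝ) := expPerturbation (n + 1) ε with hμdef
  have hμpi : μ = Measure.pi fun _ : Fin (n + 1) => ProbabilityTheory.expMeasure ε := rfl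
  haveI : IsProbabilityMeasure μ := by rw [hμpi]; infer_instance
  set τr : ℝ := (t : ℝ) with hτdef
  have hτ1 : (1 : ℝ) ≤ τr := by rw [hτdef]; exact_mod_cast ht
  set M : ℝ := ((n + 1 : ℕ) : ℝ) with hMdef
  have hM1 : (1 : ℝ) ≤ M := by rw [hMdef]; exact_mod_cast Nat.succ_le_succ (Nat.zero_le n)
  set a : ℝ := τr / (τr + 1) with hadef
  have ha0 : 0 < a := div_pos (by linarith) (by linarith)
  have ha1 : a ≤ 1 := by rw [hadef, div_le_one (by linarith)]; linarith
  have hainv : a⁻¹ - 1 = 1 / τr := by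
    rw [hadef]
    field_simp
    ring
  set P : Fin (n + 1) → ℝ := fun j => ∑ τ ∈ Finset.Icc 1 (t - 1), θ τ j with hPdef
  have hPj : ∀ j, (∑ τ ∈ Finset.Icc 1 (t - 1), θ τ j) = P j := fun j => rfl
  have hP0 : ∀ j, 0 ≤ P j := fun j => Finset.sum_nonneg fun τ _ => (hθ τ j).1
  have hcard1 : (((Finset.Icc 1 (t - 1)).card : ℕ) : ℝ) = τr - 1 := by
    rw [Nat.card_Icc]
    simp only [Nat.add_sub_cancel]
    rw [Nat.cast_sub ht, hτdef, Nat.cast_one]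
  have hcardt : (((Finset.Icc 1 t).card : ℕ) : ℝ) = τr := by
    rw [Nat.card_Icc]
    simp [hτdef]
  have hPle : ∀ j, P j ≤ (τr - 1) * D := by
    intro j
    calc P j ≤ ∑ τ ∈ Finset.Icc 1 (t - 1), D :=
          Finset.sum_le_sum fun τ _ => (hθ τ j).2
      _ = (((Finset.Icc 1 (t - 1)).card : ℕ) : ℝ) * D := by
          rw [Finset.sum_const, nsmul_eq_mul]
      _ = (τr - 1) * D := by rw [hcard1]
  set b : Fin (n + 1) → ℝ := fun j => a * θ t j - P j / (τr + 1) with hbdef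
  have hbj : ∀ j, b j = a * θ t j - P j / (τr + 1) := fun j => rfl
  have hb : ∀ j, |b j| ≤ a * D := by
    intro j
    rw [abs_le]
    constructor
    · rw [hbj]
      have h1 : P j / (τr + 1) ≤ a * D := by
        rw [div_le_iff₀ (by linarith : (0:ℝ) < τr + 1)]
        have : a * D * (τr + 1) = τr * D := by rw [hadef]; field_simp
        rw [this]
        nlinarith [hPle j]
      nlinarith [mul_nonneg ha0.le (hθ t j).1]
    · rw [hbj]
      have h2 : a * θ t j ≤ a * D := mul_le_mul_of_nonneg_left (hθ t j).2 ha0.le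
      have h3 : 0 ≤ P j / (τr + 1) := div_nonneg (hP0 j) (by linarith)
      linarith
  set C : ℝ := M * D + H with hCdef
  have hC0 : 0 ≤ C := by
    rw [hCdef]
    have := mul_nonneg (by linarith : (0:ℝ) ≤ M) hD
    linarith
  have hsumθ : ∀ S : Finset (Fin (n + 1)), 0 ≤ (∑ j ∈ S, θ t j)
      ∧ (∑ j ∈ S, θ t j) ≤ M * D := by
    intro S
    constructor
    · exact Finset.sum_nonneg fun j _ => (hθ t j).1
    · calc (∑ j ∈ S, θ t j) ≤ ∑ j ∈ S, D := Finset.sum_le_sum fun j _ => (hθ t j).2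
        _ = (S.card : ℝ) * D := by rw [Finset.sum_const, nsmul_eq_mul]
        _ ≤ M * D := by
            refine mul_le_mul_of_nonneg_right ?_ hD
            rw [hMdef]
            exact_mod_cast Finset.card_le_univ S |>.trans (by simp)
  set G : Finset (Fin (n + 1)) → ℝ := fun S => v S - (∑ j ∈ S, θ t j) + M * D with hGdef
  have hGj : ∀ S, G S = v S - (∑ j ∈ S, θ t j) + M * D := fun S => rfl
  have hG0 : ∀ S, 0 ≤ G S := by
    intro S
    rw [hGj]
    have := (hv S).1
    have := (hsumθ S).2
    linarith
  have hGC : ∀ S, G S ≤ C := by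
    intro S
    rw [hGj, hCdef]
    have := (hv S).2
    have := (hsumθ S).1
    linarith
  have hhm : Measurable fun x => G (B' x) := FTPLAux.selector_measurable B' hB'meas G
  have hGBm : Measurable fun x => G (B x) := FTPLAux.selector_measurable B hBmeas G
  -- reformulate the optimality hypotheses
  have key_sum : ∀ (S : Finset (Fin (n + 1))) (u : Finset ℕ),
      (∑ τ ∈ u, buyerUtil (n + 1) v S (θ τ))
        = ((u.card : ℕ) : ℝ) * v S - ∑ j ∈ S, ∑ τ ∈ u, θ τ j := by
    intro S u
    simp only [buyerUtil]
    rw [Finset.sum_sub_distrib, Finset.sum_const, nsmul_eq_mul, Finset.sum_comm]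
  have hsplitθ : ∀ j, (∑ τ ∈ Finset.Icc 1 t, θ τ j) = P j + θ t j := by
    intro j
    have hIcc : Finset.Icc 1 t = insert t (Finset.Icc 1 (t - 1)) := by
      ext τ
      simp only [Finset.mem_Icc, Finset.mem_insert]
      omega
    have htnot : t ∉ Finset.Icc 1 (t - 1) := by
      simp only [Finset.mem_Icc]
      omega
    rw [hIcc, Finset.sum_insert htnot, hPj j]
    ring
  have hW' : ∀ (x : Fin (n + 1) → ℝ) (S : Finset (Fin (n + 1))),
      τr * v (B' x) - ((∑ j ∈ B' x, P j) + (∑ j ∈ B' x, x j))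
        ≥ τr * v S - ((∑ j ∈ S, P j) + (∑ j ∈ S, x j)) := by
    intro x S
    have h0 := hB' x S
    rw [key_sum (B' x) (Finset.Icc 1 (t - 1)), key_sum S (Finset.Icc 1 (t - 1))] at h0
    simp only [buyerUtil, hcard1] at h0
    simp only [Finset.sum_congr rfl fun j _ => hPj j] at h0
    linarith
  have hΨ : ∀ (x : Fin (n + 1) → ℝ) (S : Finset (Fin (n + 1))),
      (τr + 1) * v (B x) - ((∑ j ∈ B x, P j) + (∑ j ∈ B x, θ t j) + (∑ j ∈ B x, x j))
        ≥ (τr + 1) * v S - ((∑ j ∈ S, P j) + (∑ j ∈ S, θ t j) + (∑ j ∈ S, x j)) := by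
    intro x S
    have h0 := hB x S
    rw [key_sum (B x) (Finset.Icc 1 t), key_sum S (Finset.Icc 1 t)] at h0
    simp only [buyerUtil, hcardt] at h0
    simp only [Finset.sum_congr rfl fun j _ => hsplitθ j, Finset.sum_add_distrib] at h0
    linarith
  -- scaling identity
  have hterm : ∀ (j : Fin (n + 1)) (xj : ℝ), P j + (a * xj + b j)
      = a * (P j + θ t j + xj) := by
    intro j xj
    rw [hbj, hadef]
    have hne : τr + 1 ≠ 0 := by linarith
    field_simp
    ring
  have hscale : ∀ (S : Finset (Fin (n + 1))) (x : Fin (n + 1) → ℝ),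
      τr * v S - (∑ j ∈ S, (P j + (a * x j + b j)))
        = a * ((τr + 1) * v S
            - ((∑ j ∈ S, P j) + (∑ j ∈ S, θ t j) + (∑ j ∈ S, x j))) := by
    intro S x
    have hτa : a * (τr + 1) = τr := by
      rw [hadef]; field_simp
    have hsum : (∑ j ∈ S, (P j + (a * x j + b j)))
        = a * ((∑ j ∈ S, P j) + (∑ j ∈ S, θ t j) + (∑ j ∈ S, x j)) := by
      rw [Finset.sum_congr rfl fun j _ => hterm j (x j), ← Finset.mul_sum]
      congr 1
      rw [Finset.sum_add_distrib, Finset.sum_add_distrib]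
    rw [hsum, mul_sub, ← mul_assoc, hτa]
  have hBmaxW : ∀ (x : Fin (n + 1) → ℝ) (S : Finset (Fin (n + 1))),
      τr * v (B x) - (∑ j ∈ B x, (P j + (a * x j + b j)))
        ≥ τr * v S - (∑ j ∈ S, (P j + (a * x j + b j))) := by
    intro x S
    rw [hscale, hscale]
    exact mul_le_mul_of_nonneg_left (hΨ x S) ha0.le
  -- the tie set
  set Good : Set (Fin (n + 1) → ℝ) := {x | ∀ S S' : Finset (Fin (n + 1)), S ≠ S' →
      ((τr + 1) * v S - ((∑ j ∈ S, P j) + (∑ j ∈ S, θ t j) + (∑ j ∈ S, x j)))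
        ≠ ((τr + 1) * v S' - ((∑ j ∈ S', P j) + (∑ j ∈ S', θ t j) + (∑ j ∈ S', x j)))}
    with hGood
  have hgood_eq : ∀ x ∈ Good, G (B x) = G (B' (fun j => a * x j + b j)) := by
    intro x hx
    set y : Fin (n + 1) → ℝ := fun j => a * x j + b j with hy
    by_cases hBB : B x = B' y
    · rw [hBB]
    · exfalso
      have h1 := hBmaxW x (B' y)
      have h2 := hW' y (B x)
      have h2' : τr * v (B' y) - (∑ j ∈ B' y, (P j + (a * x j + b j)))
          ≥ τr * v (B x) - (∑ j ∈ B x, (P j + (a * x j + b j))) := by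
        have e1 : ∀ S : Finset (Fin (n + 1)), (∑ j ∈ S, (P j + (a * x j + b j)))
            = (∑ j ∈ S, P j) + (∑ j ∈ S, y j) := by
          intro S
          rw [Finset.sum_add_distrib]
        rw [e1 (B' y), e1 (B x)]
        exact h2
      have heqW : τr * v (B x) - (∑ j ∈ B x, (P j + (a * x j + b j)))
          = τr * v (B' y) - (∑ j ∈ B' y, (P j + (a * x j + b j))) := le_antisymm h2' h1
      rw [hscale, hscale] at heqW
      have hΨeq := mul_left_cancel₀ ha0.ne' heqW
      exact hx (B x) (B' y) hBB hΨeq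
  have hGoodMeas : μ Goodᶜ = 0 := by
    have hsub : Goodᶜ ⊆ ⋃ p : Finset (Fin (n + 1)) × Finset (Fin (n + 1)),
        {x | p.1 ≠ p.2 ∧
          ((τr + 1) * v p.1 - ((∑ j ∈ p.1, P j) + (∑ j ∈ p.1, θ t j) + (∑ j ∈ p.1, x j)))
            = ((τr + 1) * v p.2
                - ((∑ j ∈ p.2, P j) + (∑ j ∈ p.2, θ t j) + (∑ j ∈ p.2, x j)))} := by
      intro x hx
      simp only [hGood, Set.mem_compl_iff, Set.mem_setOf_eq, not_forall] at hx
      obtain ⟨S, S', hne, heq⟩ := hx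
      refine Set.mem_iUnion.mpr ⟨(S, S'), ?_⟩
      exact ⟨hne, not_not.mp heq⟩
    refine measure_mono_null hsub (measure_iUnion_null fun p => ?_)
    by_cases hp : p.1 = p.2
    · have hempty : {x : Fin (n + 1) → ℝ | p.1 ≠ p.2 ∧
          ((τr + 1) * v p.1 - ((∑ j ∈ p.1, P j) + (∑ j ∈ p.1, θ t j) + (∑ j ∈ p.1, x j)))
            = ((τr + 1) * v p.2
                - ((∑ j ∈ p.2, P j) + (∑ j ∈ p.2, θ t j) + (∑ j ∈ p.2, x j)))}
          ⊆ (∅ : Set (Fin (n + 1) → ℝ)) := fun x hx => (hx.1 hp).elim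
      exact measure_mono_null hempty measure_empty
    · set σ : Fin (n + 1) → ℝ :=
        fun j => (if j ∈ p.2 then (1:ℝ) else 0) - (if j ∈ p.1 then (1:ℝ) else 0) with hσdef
      have hσsum : ∀ x : Fin (n + 1) → ℝ,
          (∑ j, σ j * x j) = (∑ j ∈ p.2, x j) - ∑ j ∈ p.1, x j := by
        intro x
        simp only [hσdef, sub_mul, ite_mul, one_mul, zero_mul]
        rw [Finset.sum_sub_distrib]
        congr 1 <;> · rw [← Finset.sum_filter]; congr 1; ext j; simp
      obtain ⟨j0, hj0⟩ : ∃ j0, ¬ (j0 ∈ p.1 ↔ j0 ∈ p.2) := by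
        by_contra hall
        push_neg at hall
        exact hp (Finset.ext_iff.mpr fun j => hall j)
      have hσj0 : σ j0 ≠ 0 := by
        rw [hσdef]
        by_cases h1 : j0 ∈ p.1 <;> by_cases h2 : j0 ∈ p.2 <;>
          simp [h1, h2] at hj0 ⊢
      set c : ℝ := ((τr + 1) * v p.2 - ((∑ j ∈ p.2, P j) + (∑ j ∈ p.2, θ t j)))
          - ((τr + 1) * v p.1 - ((∑ j ∈ p.1, P j) + (∑ j ∈ p.1, θ t j))) with hcdef
      have hsub2 : {x : Fin (n + 1) → ℝ | p.1 ≠ p.2 ∧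
          ((τr + 1) * v p.1 - ((∑ j ∈ p.1, P j) + (∑ j ∈ p.1, θ t j) + (∑ j ∈ p.1, x j)))
            = ((τr + 1) * v p.2
                - ((∑ j ∈ p.2, P j) + (∑ j ∈ p.2, θ t j) + (∑ j ∈ p.2, x j)))}
          ⊆ {x | ∑ j, σ j * x j = c} := by
        intro x hx
        simp only [Set.mem_setOf_eq] at hx ⊢
        rw [hσsum x, hcdef]
        linarith [hx.2]
      exact measure_mono_null hsub2 (by rw [hμpi] at *; exact FTPLAux.pi_null n hε σ j0 hσj0 c)
  -- integrability
  have hInt1 : Integrable (fun x => G (B x)) μ :=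
    FTPLAux.bounded_integrable μ hGBm (fun x => hG0 _) (fun x => hGC _)
  have hInt2 : Integrable (fun x => G (B' x)) μ :=
    FTPLAux.bounded_integrable μ hhm (fun x => hG0 _) (fun x => hGC _)
  -- rewrite the integrand
  have hGdiff : (fun x => buyerUtil (n + 1) v (B x) (θ t) - buyerUtil (n + 1) v (B' x) (θ t))
      = fun x => G (B x) - G (B' x) := by
    funext x
    simp only [buyerUtil, hGj]
    ring
  rw [hGdiff, integral_sub hInt1 hInt2]
  -- almost-everywhere identification with the shifted integral
  have hae : (fun x => G (B x)) =ᵐ[μ] fun x => G (B' (fun j => a * x j + b j)) := by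
    rw [Filter.EventuallyEq, ae_iff]
    refine measure_mono_null ?_ hGoodMeas
    intro x hx
    simp only [Set.mem_setOf_eq] at hx
    simp only [Set.mem_compl_iff]
    intro hg
    exact hx (hgood_eq x hg)
  rw [integral_congr_ae hae]
  -- apply the product shift bound
  have hstep := FTPLAux.pi_shift_bound n hε ha0 ha1 hD hC0 b hb hhm
    (fun x => hG0 _) (fun x => hGC _)
  rw [← hμpi] at hstep
  have hM' : ((n : ℝ) + 1) = M := by rw [hMdef]; push_cast; ring
  rw [hM', hainv] at hstep
  -- conclude
  have hfinal : C * M * (1 / τr + ε * D) ≤ C * (M / τr + 3 * ε * M * D) := by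
    have h1 : C * M * (1 / τr + ε * D) = C * (M / τr + ε * M * D) := by ring
    rw [h1]
    refine mul_le_mul_of_nonneg_left ?_ hC0
    have h2 : 0 ≤ ε * M * D :=
      mul_nonneg (mul_nonneg hε.le (by linarith : (0:ℝ) ≤ M)) hD
    linarith
  have hεMD : 0 ≤ ε * M * D := by
    have := mul_nonneg (mul_nonneg hε.le (by linarith : (0:ℝ) ≤ M)) hD
    linarith
  linarith
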